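/- For the transmission of a biased BMS with bias p < δ over a BSC(δ) with bit error rate distortion, the symbol-by-symbol scheme whose decoder always outputs the all-zero vector achieves excess-distortion probability P[T > ⌊nd⌋] where T is Binomial(n, p); i.e., D_1(n,ε) = min{d : Σ_{t=0}^{⌊nd⌋} C(n,t) p^t (1-p)^{n-t} ≥ 1-ε}. More generally, for any 0 ≤ p ≤ 1/2 and δ ≤ 1/2, the better of uncoded transmission (if p ≥ δ) and all-zero decoding (if p < δ) achieves D_1(n,ε) = min{d : Σ_{t=0}^{⌊nd⌋} C(n,t) m^t (1-m)^{n-t} ≥ 1-ε} where m = min{p, δ}. -/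

import Mathlib

open Finset

def cnt {n : ℕ} (s : Fin n → Bool) : ℕ := (Finset.univ.filter (fun i => s i = true)).card

lemma prod_ite_eq_pow {n : ℕ} (q : ℝ) (s : Fin n → Bool) :
    (∏ i, (if s i then q else 1 - q)) = q ^ cnt s * (1 - q) ^ (n - cnt s) := by
  rw [← Finset.prod_filter_mul_prod_filter_not Finset.univ (fun i => s i = true)]
  have h1 : (∏ i ∈ univ.filter (fun i => s i = true), (if s i then q else 1 - q)) = q ^ cnt s := by
    rw [Finset.prod_congr rfl (fun i hi => ?_), Finset.prod_const, cnt]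
    simp only [mem_filter] at hi
    simp [hi.2]
  have h2 : (∏ i ∈ univ.filter (fun i => ¬ s i = true), (if s i then q else 1 - q))
      = (1 - q) ^ (n - cnt s) := by
    have hcard : (univ.filter (fun i => ¬ s i = true)).card = n - cnt s := by
      have := Finset.card_filter_add_card_filter_not (s := (univ : Finset (Fin n)))
        (p := fun i => s i = true)
      simp only [card_univ, Fintype.card_fin] at this
      unfold cnt
      omega
    rw [Finset.prod_congr rfl (fun i hi => ?_), Finset.prod_const, hcard]
    simp only [mem_filter] at hi
    simp [hi.2]
  rw [h1, h2]

lemma sum_cnt (n : ℕ) (g : ℕ → ℝ) :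
    ∑ s : Fin n → Bool, g (cnt s) = ∑ t ∈ range (n + 1), (n.choose t : ℝ) * g t := by
  have e : ∑ s : Fin n → Bool, g (cnt s) = ∑ A : Finset (Fin n), g A.card := by
    apply Fintype.sum_bijective (fun s : Fin n → Bool => univ.filter (fun i => s i = true))
    · refine Function.bijective_iff_has_inverse.mpr
        ⟨fun A => fun i => decide (i ∈ A), fun s => ?_, fun A => ?_⟩
      · funext i; simp
      · ext i; simp
    · intro s; rfl
  rw [e, ← Finset.powerset_univ, Finset.sum_powerset_apply_card]
  simp [card_univ]

lemma Sval (n k : ℕ) (q : ℝ) :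
    ∑ s : Fin n → Bool, (∏ i, (if s i then q else 1 - q)) * (if k < cnt s then (1:ℝ) else 0)
    = 1 - ∑ t ∈ range (k + 1), (n.choose t : ℝ) * q ^ t * (1 - q) ^ (n - t) := by
  have h1 : ∑ s : Fin n → Bool,
      (∏ i, (if s i then q else 1 - q)) * (if k < cnt s then (1:ℝ) else 0)
      = ∑ t ∈ range (n + 1), (n.choose t : ℝ) *
          (q ^ t * (1 - q) ^ (n - t) * (if k < t then (1:ℝ) else 0)) := by
    rw [← sum_cnt n (fun t => q ^ t * (1 - q) ^ (n - t) * (if k < t then (1:ℝ) else 0))]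
    exact Finset.sum_congr rfl fun s _ => by rw [prod_ite_eq_pow]
  have hone : ∑ t ∈ range (n + 1), (n.choose t : ℝ) * (q ^ t * (1 - q) ^ (n - t)) = 1 := by
    have h := add_pow q (1 - q) n
    simp only [add_sub_cancel, one_pow] at h
    calc ∑ t ∈ range (n + 1), (n.choose t : ℝ) * (q ^ t * (1 - q) ^ (n - t))
        = ∑ t ∈ range (n + 1), q ^ t * (1 - q) ^ (n - t) * (n.choose t : ℝ) :=
          Finset.sum_congr rfl fun t _ => by ring
      _ = 1 := h.symm
  have h2 : ∑ t ∈ range (n + 1), (n.choose t : ℝ) *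
        (q ^ t * (1 - q) ^ (n - t) * (if t ≤ k then (1:ℝ) else 0))
      = ∑ t ∈ range (k + 1), (n.choose t : ℝ) * q ^ t * (1 - q) ^ (n - t) := by
    have hL : ∑ t ∈ range (n + 1), (n.choose t : ℝ) *
          (q ^ t * (1 - q) ^ (n - t) * (if t ≤ k then (1:ℝ) else 0))
        = ∑ t ∈ range (max n k + 1), (n.choose t : ℝ) *
          (q ^ t * (1 - q) ^ (n - t) * (if t ≤ k then (1:ℝ) else 0)) := by
      apply Finset.sum_subset (Finset.range_subset_range.2 (by omega))
      intro t _ ht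
      rw [Finset.mem_range, not_lt] at ht
      rw [Nat.choose_eq_zero_of_lt (show n < t by omega)]
      simp
    have hR : ∑ t ∈ range (k + 1), (n.choose t : ℝ) * q ^ t * (1 - q) ^ (n - t)
        = ∑ t ∈ range (max n k + 1), (n.choose t : ℝ) *
          (q ^ t * (1 - q) ^ (n - t) * (if t ≤ k then (1:ℝ) else 0)) := by
      have e1 : ∑ t ∈ range (k + 1), (n.choose t : ℝ) * q ^ t * (1 - q) ^ (n - t)
          = ∑ t ∈ range (k + 1), (n.choose t : ℝ) *
              (q ^ t * (1 - q) ^ (n - t) * (if t ≤ k then (1:ℝ) else 0)) :=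
        Finset.sum_congr rfl fun t ht => by
          rw [if_pos (Nat.lt_succ_iff.mp (Finset.mem_range.mp ht))]; ring
      rw [e1]
      apply Finset.sum_subset (Finset.range_subset_range.2 (by omega))
      intro t _ ht
      rw [Finset.mem_range, not_lt] at ht
      rw [if_neg (show ¬ t ≤ k by omega)]
      simp
    rw [hL, hR]
  rw [h1, show (1:ℝ) - ∑ t ∈ range (k + 1), (n.choose t : ℝ) * q ^ t * (1 - q) ^ (n - t)
      = ∑ t ∈ range (n + 1), (n.choose t : ℝ) * (q ^ t * (1 - q) ^ (n - t))
        - ∑ t ∈ range (n + 1), (n.choose t : ℝ) *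
            (q ^ t * (1 - q) ^ (n - t) * (if t ≤ k then (1:ℝ) else 0)) from by rw [hone, h2],
    ← Finset.sum_sub_distrib]
  apply Finset.sum_congr rfl
  intro t _
  by_cases h : k < t
  · rw [if_pos h, if_neg (by omega)]; ring
  · rw [if_neg h, if_pos (by omega)]; ring

lemma couple (n : ℕ) (p δ : ℝ) (hp0 : 0 ≤ p) (hpδ : p ≤ δ) (hδ1 : δ ≤ 1)
    (f : ℕ → ℝ) (hf : Monotone f) :
    ∑ s : Fin n → Bool, (∏ i, (if s i then p else 1 - p)) * f (cnt s)
    ≤ ∑ s : Fin n → Bool, (∏ i, (if s i then δ else 1 - δ)) * f (cnt s) := by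
  set φ : Bool → Bool → ℝ :=
    fun a b => if a then (if b then p else 0) else (if b then δ - p else 1 - δ) with hφ
  have hL : ∀ a : Fin n → Bool,
      (∏ i, (if a i then p else 1 - p)) = ∑ b : Fin n → Bool, ∏ i, φ (a i) (b i) := by
    intro a
    rw [← Fintype.prod_sum]
    refine Finset.prod_congr rfl fun i _ => ?_
    cases a i <;> simp [hφ, Fintype.sum_bool]
  have hR : ∀ b : Fin n → Bool,
      (∏ i, (if b i then δ else 1 - δ)) = ∑ a : Fin n → Bool, ∏ i, φ (a i) (b i) := by
    intro b
    rw [← Fintype.prod_sum (f := fun i (x : Bool) => φ x (b i))]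
    refine Finset.prod_congr rfl fun i _ => ?_
    cases b i <;> simp [hφ, Fintype.sum_bool]
  calc ∑ a : Fin n → Bool, (∏ i, (if a i then p else 1 - p)) * f (cnt a)
      = ∑ a : Fin n → Bool, ∑ b : Fin n → Bool, (∏ i, φ (a i) (b i)) * f (cnt a) := by
        exact Finset.sum_congr rfl fun a _ => by rw [hL a, Finset.sum_mul]
    _ ≤ ∑ a : Fin n → Bool, ∑ b : Fin n → Bool, (∏ i, φ (a i) (b i)) * f (cnt b) := by
        apply Finset.sum_le_sum; intro a _
        apply Finset.sum_le_sum; intro b _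
        by_cases h : ∀ i, a i = true → b i = true
        · have hsub : cnt a ≤ cnt b := by
            apply Finset.card_le_card
            exact Finset.monotone_filter_right _ (fun i _ hi => h i hi)
          have hw : 0 ≤ ∏ i, φ (a i) (b i) := by
            apply Finset.prod_nonneg; intro i _
            cases a i <;> cases b i <;> simp [hφ] <;> linarith
          exact mul_le_mul_of_nonneg_left (hf hsub) hw
        · push_neg at h
          obtain ⟨i, hai, hbi⟩ := h
          have : (∏ i, φ (a i) (b i)) = 0 := by
            apply Finset.prod_eq_zero (Finset.mem_univ i)
            simp [hφ, hai, hbi]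
          rw [this]; simp
    _ = ∑ b : Fin n → Bool, (∏ i, (if b i then δ else 1 - δ)) * f (cnt b) := by
        rw [Finset.sum_comm]
        exact Finset.sum_congr rfl fun b _ => by rw [hR b, Finset.sum_mul]

/-- Transmission of a Bernoulli(p) source over a BSC(δ) under bit-error-rate
distortion: the better of uncoded transmission and all-zero decoding achieves
excess-distortion probability `P[T > ⌊nd⌋]` with `T ~ Binomial(n, min{p, δ})`. -/
theorem stmt17 (n : ℕ) (hn : 0 < n) (p δ d : ℝ)
    (hp0 : 0 ≤ p) (hp1 : p ≤ 1 / 2) (hδ0 : 0 ≤ δ) (hδ1 : δ ≤ 1 / 2) (hd : 0 ≤ d) :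
    min
      -- uncoded transmission
      (∑ s : Fin n → Bool, ∑ e : Fin n → Bool,
        ((∏ i, (if s i then p else 1 - p)) * ∏ i, (if e i then δ else 1 - δ)) *
          (if d < ((Finset.univ.filter
              (fun i => s i ≠ Bool.xor (s i) (e i))).card : ℝ) / n
           then (1 : ℝ) else 0))
      -- decoder always outputs the all-zero vector
      (∑ s : Fin n → Bool,
        (∏ i, (if s i then p else 1 - p)) *
          (if d < ((Finset.univ.filter (fun i => s i ≠ false)).card : ℝ) / n
           then (1 : ℝ) else 0))
      = 1 - ∑ t ∈ Finset.range (⌊(n : ℝ) * d⌋₊ + 1),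
          (n.choose t : ℝ) * (min p δ) ^ t * (1 - min p δ) ^ (n - t) := by
  set k := ⌊(n : ℝ) * d⌋₊ with hk
  set f : ℕ → ℝ := fun t => if k < t then (1:ℝ) else 0 with hfdef
  have hf : Monotone f := by
    intro t t' htt
    simp only [hfdef]
    split_ifs with h1 h2 <;> first | omega | norm_num
  have hn' : (0:ℝ) < n := by exact_mod_cast hn
  have hiff : ∀ t : ℕ, (d < (t:ℝ) / n) ↔ k < t := by
    intro t
    rw [lt_div_iff₀ hn', hk, Nat.floor_lt (by positivity), mul_comm]
  have hzero : (∑ s : Fin n → Bool,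
        (∏ i, (if s i then p else 1 - p)) *
          (if d < ((Finset.univ.filter (fun i => s i ≠ false)).card : ℝ) / n
           then (1 : ℝ) else 0))
      = ∑ s : Fin n → Bool, (∏ i, (if s i then p else 1 - p)) * f (cnt s) := by
    refine Finset.sum_congr rfl fun s _ => ?_
    congr 1
    have hset : univ.filter (fun i => s i ≠ false) = univ.filter (fun i => s i = true) := by
      ext i; simp
    rw [hset]
    exact if_congr (hiff _) rfl rfl
  have hone : ∑ s : Fin n → Bool, (∏ i, (if s i then p else 1 - p)) = 1 := by
    rw [← Fintype.prod_sum (f := fun (_ : Fin n) (x : Bool) => if x then p else 1 - p)]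
    simp [Fintype.sum_bool]
  have huncoded : (∑ s : Fin n → Bool, ∑ e : Fin n → Bool,
        ((∏ i, (if s i then p else 1 - p)) * ∏ i, (if e i then δ else 1 - δ)) *
          (if d < ((Finset.univ.filter
              (fun i => s i ≠ Bool.xor (s i) (e i))).card : ℝ) / n
           then (1 : ℝ) else 0))
      = ∑ e : Fin n → Bool, (∏ i, (if e i then δ else 1 - δ)) * f (cnt e) := by
    have hstep : ∀ s e : Fin n → Bool,
        (Finset.univ.filter (fun i => s i ≠ Bool.xor (s i) (e i)))
          = univ.filter (fun i => e i = true) := by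
      intro s e; ext i
      cases hs : s i <;> cases he : e i <;> simp [hs, he]
    calc ∑ s : Fin n → Bool, ∑ e : Fin n → Bool,
          ((∏ i, (if s i then p else 1 - p)) * ∏ i, (if e i then δ else 1 - δ)) *
            (if d < ((Finset.univ.filter
                (fun i => s i ≠ Bool.xor (s i) (e i))).card : ℝ) / n
             then (1 : ℝ) else 0)
        = ∑ s : Fin n → Bool, (∏ i, (if s i then p else 1 - p)) *
            ∑ e : Fin n → Bool, (∏ i, (if e i then δ else 1 - δ)) * f (cnt e) := by
          refine Finset.sum_congr rfl fun s _ => ?_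
          rw [Finset.mul_sum]
          refine Finset.sum_congr rfl fun e _ => ?_
          rw [hstep s e, show (if d < ((univ.filter (fun i => e i = true)).card : ℝ) / n
              then (1:ℝ) else 0) = f (cnt e) from if_congr (hiff _) rfl rfl]
          ring
      _ = ∑ e : Fin n → Bool, (∏ i, (if e i then δ else 1 - δ)) * f (cnt e) := by
          rw [← Finset.sum_mul, hone, one_mul]
  rw [hzero, huncoded]
  rcases le_total p δ with h | h
  · rw [min_eq_left h,
      min_eq_right (couple n p δ hp0 h (le_trans hδ1 (by norm_num)) f hf)]
    exact Sval n k p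
  · rw [min_eq_right h,
      min_eq_left (couple n δ p hδ0 h (le_trans hp1 (by norm_num)) f hf)]
    exact Sval n k δ
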